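/- Let z, ẑ ∈ ℝ, let l < 0 < u be real bounds with l ≤ ẑ ≤ u, and let δ ∈ {0,1}. Then the system of inequalities { z ≥ ẑ, z ≥ 0, z ≤ ẑ - l(1-δ), z ≤ u·δ } holds for some δ ∈ {0,1} if and only if z = max(ẑ, 0). -/
import Mathlib


theorem stmt_3 (z zhat l u : ℝ) (hl : l < 0) (hu : 0 < u) (hlz : l ≤ zhat) (hzu : zhat ≤ u) :
    (∃ δ : ℝ, (δ = 0 ∨ δ = 1) ∧
      zhat ≤ z ∧ 0 ≤ z ∧ z ≤ zhat - l * (1 - δ) ∧ z ≤ u * δ) ↔ z = max zhat 0 := by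
  constructor
  · rintro ⟨δ, (rfl | rfl), h1, h2, h3, h4⟩
    · simp only [mul_zero] at h4
      have : z = 0 := le_antisymm h4 h2
      subst this
      rw [eq_comm, max_eq_right_iff]
      linarith
    · simp only [sub_self, mul_zero, sub_zero] at h3
      have : z = zhat := le_antisymm h3 h1
      subst this
      rw [eq_comm, max_eq_left_iff]
      exact h2
  · rintro rfl
    rcases le_or_gt zhat 0 with h | h
    · rw [max_eq_right h]
      exact ⟨0, Or.inl rfl, h, le_refl 0, by nlinarith, by nlinarith⟩
    · rw [max_eq_left h.le]
      exact ⟨1, Or.inr rfl, le_refl zhat, h.le, by nlinarith, by nlinarith⟩
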